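/- Let k ≥ 1 and let s be a barred state having a k-fuse. A finite sequence (j_1,…,j_m) of positive integers with j_1 ≤ k is playable from s if and only if it is weakly decreasing and, writing its distinct values in decreasing order as v_1 > v_2 > ⋯ > v_p with respective multiplicities r_1,…,r_p and setting v_0 = k+1, one has r_q ≤ v_{q−1} − v_q for every 1 ≤ q ≤ p. -/

import Mathlib

/-- A barred state: a sequence `μ` of natural numbers indexed by the positive
integers (the value at `0` is irrelevant) together with a set `S` of barred
positions, all positive and with `μ_j ≠ 0` for `j ∈ S`. -/
structure BarredState where
  mu : ℕ → ℕ
  bars : Set ℕ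
  bars_pos : ∀ j ∈ bars, 1 ≤ j
  bars_ne : ∀ j ∈ bars, mu j ≠ 0

/-- The sequence obtained from `μ` by the move `R_j`:
`μ'_i = μ_i` for `i < j-1`, `μ'_{j-1} = μ_{j-1} + μ_j`, and `μ'_i = μ_{i+1}` for `i ≥ j`. -/
def moveMu (mu : ℕ → ℕ) (j : ℕ) : ℕ → ℕ := fun i =>
  if i < j - 1 then mu i
  else if i = j - 1 then mu (j - 1) + mu j
  else mu (i + 1)

/-- The move `R_j` on barred states: the new barred set is
`{i : 1 ≤ i ≤ j-1, μ'_i ≠ 0} ∪ {i ≥ j : μ'_i ≠ 0 and μ_j + ⋯ + μ_i < 3}`. -/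
def BarredState.move (s : BarredState) (j : ℕ) : BarredState where
  mu := moveMu s.mu j
  bars :=
    {i | 1 ≤ i ∧ i ≤ j - 1 ∧ moveMu s.mu j i ≠ 0} ∪
    {i | 1 ≤ i ∧ j ≤ i ∧ moveMu s.mu j i ≠ 0 ∧ (∑ t ∈ Finset.Icc j i, s.mu t) < 3}
  bars_pos := by
    rintro i (⟨h, -, -⟩ | ⟨h, -, -, -⟩) <;> exact h
  bars_ne := by
    rintro i (⟨-, -, h⟩ | ⟨-, -, h, -⟩) <;> exact h

/-- A finite sequence `(j_1, …, j_m)` is playable from `s` if `j_1` is barred in `s`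
and `(j_2, …, j_m)` is playable from `R_{j_1}(s)`. -/
def PlayableSeq : BarredState → List ℕ → Prop
  | _, [] => True
  | s, j :: js => j ∈ s.bars ∧ PlayableSeq (s.move j) js

/-- The state obtained by playing a sequence of moves. -/
def playAll : BarredState → List ℕ → BarredState
  | s, [] => s
  | s, j :: js => playAll (s.move j) js

/-- `(f_1, …, f_k)` is a `k`-fuse prefix: `f_i ∈ {1,2}` for `1 ≤ i ≤ k-1`, `f_k ≥ 3`,
and no two consecutive entries equal `1`. -/
def IsFusePrefix (k : ℕ) (f : ℕ → ℕ) : Prop :=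
  (∀ i, 1 ≤ i → i ≤ k - 1 → f i = 1 ∨ f i = 2) ∧
  3 ≤ f k ∧
  (∀ i, 1 ≤ i → i ≤ k - 1 → ¬(f i = 1 ∧ f (i + 1) = 1))

/-- A barred state has a `k`-fuse if `(μ_1, …, μ_k)` is a `k`-fuse prefix and
positions `1, …, k` are all barred. -/
def HasFuse (k : ℕ) (s : BarredState) : Prop :=
  IsFusePrefix k s.mu ∧ ∀ i, 1 ≤ i → i ≤ k → i ∈ s.bars

section Aux

lemma muM_lt (mu : ℕ → ℕ) (j i : ℕ) (h : i < j - 1) : moveMu mu j i = mu i := by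
  simp [moveMu, h]

lemma muM_eq (mu : ℕ → ℕ) (j : ℕ) : moveMu mu j (j - 1) = mu (j - 1) + mu j := by
  simp [moveMu]

lemma muM_ge (mu : ℕ → ℕ) (j i : ℕ) (hj : 1 ≤ j) (h : j ≤ i) : moveMu mu j i = mu (i + 1) := by
  have h1 : ¬ i < j - 1 := by omega
  have h2 : ¬ i = j - 1 := by omega
  simp [moveMu, h1, h2]

lemma mem_move_bars (s : BarredState) (j i : ℕ) :
    i ∈ (s.move j).bars ↔
      (1 ≤ i ∧ i ≤ j - 1 ∧ moveMu s.mu j i ≠ 0) ∨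
      (1 ≤ i ∧ j ≤ i ∧ moveMu s.mu j i ≠ 0 ∧ (∑ t ∈ Finset.Icc j i, s.mu t) < 3) := by
  rfl

lemma sum_ge_one (mu : ℕ → ℕ) (j i : ℕ) (h : j ≤ i) : mu j ≤ ∑ t ∈ Finset.Icc j i, mu t := by
  apply Finset.single_le_sum (f := mu) (fun _ _ => Nat.zero_le _)
  simp [Finset.mem_Icc, h]

lemma sum_ge_two (mu : ℕ → ℕ) (j i : ℕ) (h : j + 1 ≤ i) :
    mu j + mu (j + 1) ≤ ∑ t ∈ Finset.Icc j i, mu t := by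
  have hsub : ({j, j + 1} : Finset ℕ) ⊆ Finset.Icc j i := by
    intro t ht
    simp only [Finset.mem_insert, Finset.mem_singleton] at ht
    rcases ht with rfl | rfl <;> simp [Finset.mem_Icc] <;> omega
  have hpair : ∑ t ∈ ({j, j + 1} : Finset ℕ), mu t = mu j + mu (j + 1) :=
    Finset.sum_pair (by omega)
  calc mu j + mu (j + 1) = ∑ t ∈ ({j, j + 1} : Finset ℕ), mu t := hpair.symm
    _ ≤ _ := Finset.sum_le_sum_of_subset hsub

lemma sum_Icc_self' (mu : ℕ → ℕ) (j : ℕ) : ∑ t ∈ Finset.Icc j j, mu t = mu j := by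
  simp

/-- Bars after a "continuing" move at `j`. -/
lemma bars_eq_cont (s : BarredState) (j : ℕ) (hj : 1 ≤ j)
    (hlow : ∀ i, 1 ≤ i → i + 2 ≤ j → s.mu i ≠ 0)
    (hmuj : s.mu j ≠ 0) (hnext : s.mu (j + 1) ≠ 0)
    (hjlt : s.mu j < 3) (hsum : 3 ≤ s.mu j + s.mu (j + 1)) :
    (s.move j).bars = Set.Icc 1 j := by
  ext i
  rw [mem_move_bars]
  simp only [Set.mem_Icc]
  constructor
  · rintro (⟨h1, h2, _⟩ | ⟨h1, h2, _, h4⟩)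
    · exact ⟨h1, by omega⟩
    · refine ⟨h1, ?_⟩
      by_contra hc
      have hge : j + 1 ≤ i := by omega
      have := sum_ge_two s.mu j i hge
      omega
  · rintro ⟨h1, h2⟩
    rcases Nat.lt_or_ge i j with hi | hi
    · left
      refine ⟨h1, by omega, ?_⟩
      rcases Nat.lt_or_ge i (j - 1) with hi2 | hi2
      · rw [muM_lt _ _ _ hi2]; exact hlow i h1 (by omega)
      · have : i = j - 1 := by omega
        rw [this, muM_eq]
        omega
    · right
      have hij : i = j := by omega
      subst hij
      refine ⟨h1, le_refl _, ?_, ?_⟩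
      · rw [muM_ge _ _ _ hj (le_refl _)]
        exact hnext
      · rw [sum_Icc_self']
        exact hjlt

/-- Bars after a "terminal" move at `j` (the value at `j` is at least 3). -/
lemma bars_eq_term (s : BarredState) (j : ℕ) (hj : 1 ≤ j)
    (hlow : ∀ i, 1 ≤ i → i + 2 ≤ j → s.mu i ≠ 0)
    (hbig : 3 ≤ s.mu j) :
    (s.move j).bars = Set.Icc 1 (j - 1) := by
  ext i
  rw [mem_move_bars]
  simp only [Set.mem_Icc]
  constructor
  · rintro (⟨h1, h2, _⟩ | ⟨h1, h2, _, h4⟩)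
    · exact ⟨h1, h2⟩
    · exfalso
      have := sum_ge_one s.mu j i h2
      omega
  · rintro ⟨h1, h2⟩
    left
    refine ⟨h1, h2, ?_⟩
    rcases Nat.lt_or_ge i (j - 1) with hi2 | hi2
    · rw [muM_lt _ _ _ hi2]; exact hlow i h1 (by omega)
    · have : i = j - 1 := by omega
      rw [this, muM_eq]
      omega

end Aux
/-- The invariant maintained during play.  `m` is the largest possibly-barred
position (when `top = false`, positions `1, …, m-1` are barred); positions
`1, …, m-2` carry fuse values with no two consecutive `1`s, position `m-1`
carries a value `≥ 3`; when `top = true`, position `m` is also barred and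
positions `m, …, e` carry a fuse ending with a value `≥ 3` at `e`. -/
def StInv (s : BarredState) (m e : ℕ) (top : Bool) : Prop :=
  1 ≤ m ∧
  (∀ i, 1 ≤ i → i + 2 ≤ m → s.mu i = 1 ∨ s.mu i = 2) ∧
  (∀ i, 1 ≤ i → i + 3 ≤ m → ¬(s.mu i = 1 ∧ s.mu (i + 1) = 1)) ∧
  (2 ≤ m → 3 ≤ s.mu (m - 1)) ∧
  Set.Icc 1 (m - 1) ⊆ s.bars ∧
  (top = true → m ≤ e ∧ m ∈ s.bars ∧
    (∀ i, m ≤ i → i + 1 ≤ e → s.mu i = 1 ∨ s.mu i = 2) ∧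
    (∀ i, m ≤ i → i + 2 ≤ e → ¬(s.mu i = 1 ∧ s.mu (i + 1) = 1)) ∧
    3 ≤ s.mu e)

lemma move_mu (s : BarredState) (j : ℕ) : (s.move j).mu = moveMu s.mu j := rfl

/-- Terminal move: playing `j` where the value is `≥ 3`. -/
lemma stepT (s : BarredState) (m e : ℕ) (top : Bool) (h : StInv s m e top)
    (j : ℕ) (hj : 1 ≤ j)
    (hcase : j + 1 = m ∨ (top = true ∧ j = m ∧ e = m)) :
    (s.move j).bars = Set.Icc 1 (j - 1) ∧ StInv (s.move j) j 0 false := by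
  obtain ⟨hm1, hf2, hf3, hf4, hf5, hf6⟩ := h
  have hjm : j ≤ m := by omega
  have hbig : 3 ≤ s.mu j := by
    rcases hcase with hc | ⟨ht, rfl, he⟩
    · have : j = m - 1 := by omega
      rw [this]; exact hf4 (by omega)
    · obtain ⟨-, -, -, -, h5⟩ := hf6 ht
      rw [← he]; exact h5
  have hlow : ∀ i, 1 ≤ i → i + 2 ≤ j → s.mu i ≠ 0 := by
    intro i h1 h2
    rcases hf2 i h1 (by omega) with h | h <;> omega
  have hbars := bars_eq_term s j hj hlow hbig
  refine ⟨hbars, hj, ?_, ?_, ?_, ?_, ?_⟩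
  · intro i h1 h2
    rw [move_mu, muM_lt _ _ _ (by omega)]
    exact hf2 i h1 (by omega)
  · intro i h1 h2
    rw [move_mu, muM_lt _ _ _ (by omega), muM_lt _ _ _ (by omega)]
    exact hf3 i h1 (by omega)
  · intro h2
    rw [move_mu, muM_eq]
    omega
  · rw [hbars]
  · intro hc; exact absurd hc (by simp)

/-- Continuing move, case `j + 2 ≤ m`. -/
lemma stepC1 (s : BarredState) (m e : ℕ) (top : Bool) (h : StInv s m e top)
    (j : ℕ) (hj : 1 ≤ j) (hcase : j + 2 ≤ m) :
    (s.move j).bars = Set.Icc 1 j ∧ StInv (s.move j) j (m - 2) true := by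
  obtain ⟨hm1, hf2, hf3, hf4, hf5, hf6⟩ := h
  have hlow : ∀ i, 1 ≤ i → i + 2 ≤ j → s.mu i ≠ 0 := by
    intro i h1 h2
    rcases hf2 i h1 (by omega) with h | h <;> omega
  have hmuj : s.mu j = 1 ∨ s.mu j = 2 := hf2 j hj (by omega)
  have hnext : 3 ≤ s.mu (j + 1) ∨ (s.mu (j + 1) = 1 ∨ s.mu (j + 1) = 2) := by
    rcases Nat.lt_or_ge (j + 3) (m + 1) with hc | hc
    · right; exact hf2 (j + 1) (by omega) (by omega)
    · left
      have : j + 1 = m - 1 := by omega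
      rw [this]; exact hf4 (by omega)
  have hsum : 3 ≤ s.mu j + s.mu (j + 1) := by
    rcases hnext with h | h
    · omega
    · rcases Nat.lt_or_ge (j + 3) (m + 1) with hc | hc
      · have := hf3 j hj (by omega)
        rcases hmuj with h1 | h1 <;> rcases h with h2 | h2 <;> omega
      · have hj1 : j + 1 = m - 1 := by omega
        have := hf4 (by omega)
        rw [← hj1] at this
        omega
  have hbars := bars_eq_cont s j hj hlow (by omega) (by omega) (by omega) hsum
  refine ⟨hbars, hj, ?_, ?_, ?_, ?_, ?_⟩
  · intro i h1 h2
    rw [move_mu, muM_lt _ _ _ (by omega)]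
    exact hf2 i h1 (by omega)
  · intro i h1 h2
    rw [move_mu, muM_lt _ _ _ (by omega), muM_lt _ _ _ (by omega)]
    exact hf3 i h1 (by omega)
  · intro h2
    rw [move_mu, muM_eq]
    have hp : s.mu (j - 1) = 1 ∨ s.mu (j - 1) = 2 := hf2 (j - 1) (by omega) (by omega)
    have hnc := hf3 (j - 1) (by omega) (by omega)
    have : j - 1 + 1 = j := by omega
    rw [this] at hnc
    rcases hp with h1 | h1 <;> rcases hmuj with h2 | h2 <;> omega
  · rw [hbars]
    intro x hx
    simp only [Set.mem_Icc] at *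
    omega
  · intro _
    refine ⟨by omega, ?_, ?_, ?_, ?_⟩
    · rw [hbars]; simp [hj]
    · intro i h1 h2
      rw [move_mu, muM_ge _ _ _ hj h1]
      exact hf2 (i + 1) (by omega) (by omega)
    · intro i h1 h2
      rw [move_mu, muM_ge _ _ _ hj h1, muM_ge _ _ _ hj (by omega)]
      exact hf3 (i + 1) (by omega) (by omega)
    · rw [move_mu, muM_ge _ _ _ hj (by omega)]
      have : m - 2 + 1 = m - 1 := by omega
      rw [this]
      exact hf4 (by omega)

/-- Continuing move, case `j = m`, `m + 1 ≤ e` (requires `top`). -/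
lemma stepC2 (s : BarredState) (m e : ℕ) (h : StInv s m e true)
    (hcase : m + 1 ≤ e) :
    (s.move m).bars = Set.Icc 1 m ∧ StInv (s.move m) m (e - 1) true := by
  obtain ⟨hm1, hf2, hf3, hf4, hf5, hf6⟩ := h
  obtain ⟨hme, hmem, hu2, hu3, hu4⟩ := hf6 rfl
  have hlow : ∀ i, 1 ≤ i → i + 2 ≤ m → s.mu i ≠ 0 := by
    intro i h1 h2
    rcases hf2 i h1 h2 with h | h <;> omega
  have hmuj : s.mu m = 1 ∨ s.mu m = 2 := hu2 m (le_refl _) (by omega)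
  have hnext : 3 ≤ s.mu (m + 1) ∨ (s.mu (m + 1) = 1 ∨ s.mu (m + 1) = 2) := by
    rcases Nat.lt_or_ge (m + 1) e with hc | hc
    · right; exact hu2 (m + 1) (by omega) (by omega)
    · left
      have : m + 1 = e := by omega
      rw [this]; exact hu4
  have hsum : 3 ≤ s.mu m + s.mu (m + 1) := by
    rcases hnext with h | h
    · omega
    · rcases Nat.lt_or_ge (m + 1) e with hc | hc
      · have := hu3 m (le_refl _) (by omega)
        rcases hmuj with h1 | h1 <;> rcases h with h2 | h2 <;> omega
      · have : m + 1 = e := by omega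
        rw [this] at h
        omega
  have hbars := bars_eq_cont s m hm1 hlow (by omega) (by omega) (by omega) hsum
  refine ⟨hbars, hm1, ?_, ?_, ?_, ?_, ?_⟩
  · intro i h1 h2
    rw [move_mu, muM_lt _ _ _ (by omega)]
    exact hf2 i h1 h2
  · intro i h1 h2
    rw [move_mu, muM_lt _ _ _ (by omega), muM_lt _ _ _ (by omega)]
    exact hf3 i h1 h2
  · intro h2
    rw [move_mu, muM_eq]
    have := hf4 h2
    omega
  · rw [hbars]
    intro x hx
    simp only [Set.mem_Icc] at *
    omega
  · intro _
    refine ⟨by omega, ?_, ?_, ?_, ?_⟩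
    · rw [hbars]; simp [hm1]
    · intro i h1 h2
      rw [move_mu, muM_ge _ _ _ hm1 h1]
      exact hu2 (i + 1) (by omega) (by omega)
    · intro i h1 h2
      rw [move_mu, muM_ge _ _ _ hm1 h1, muM_ge _ _ _ hm1 (by omega)]
      exact hu3 (i + 1) (by omega) (by omega)
    · rw [move_mu, muM_ge _ _ _ hm1 (by omega)]
      have : e - 1 + 1 = e := by omega
      rw [this]
      exact hu4
/-- Recursive form of the playability condition: `b` is the current "cap";
a run of the value `j` may have length at most `b - j`, and after the run
ends the cap becomes `j`. -/
def CondR : List ℕ → ℕ → Prop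
  | [], _ => True
  | [j], b => j < b
  | j :: a :: l, b => j < b ∧ CondR (a :: l) (if a = j then b - 1 else j)

@[simp] lemma condR_nil (b : ℕ) : CondR [] b ↔ True := Iff.rfl

lemma condR_single (j b : ℕ) : CondR [j] b ↔ j < b := Iff.rfl

lemma condR_cons2 (j a : ℕ) (l : List ℕ) (b : ℕ) :
    CondR (j :: a :: l) b ↔ j < b ∧ CondR (a :: l) (if a = j then b - 1 else j) := Iff.rfl

lemma condR_head_lt (l : List ℕ) (j b : ℕ) (h : CondR (j :: l) b) : j < b := by
  cases l with
  | nil => exact h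
  | cons a t => exact h.1
lemma playable_cons (s : BarredState) (j : ℕ) (l : List ℕ) :
    PlayableSeq s (j :: l) ↔ j ∈ s.bars ∧ PlayableSeq (s.move j) l := Iff.rfl

lemma mainLemma (js : List ℕ) : ∀ (s : BarredState) (m e : ℕ) (top : Bool),
    StInv s m e top → (∀ j ∈ js, 1 ≤ j) →
    (∀ a ∈ js.head?, a ≤ if top then m else m - 1) →
    (PlayableSeq s js ↔
      CondR js (if top = true ∧ js.head? = some m then e + 1 else m)) := by
  induction js with
  | nil =>
    intro s m e top _ _ _
    simp [PlayableSeq]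
  | cons j rest ih =>
    intro s m e top hinv hpos hhead
    have hinv' := hinv
    obtain ⟨hm1, hf2, hf3, hf4, hf5, hf6⟩ := hinv'
    have hj1 : 1 ≤ j := hpos j (by simp)
    have hhd : j ≤ if top then m else m - 1 := hhead j rfl
    have hposr : ∀ x ∈ rest, 1 ≤ x := fun x hx => hpos x (by simp [hx])
    have hcases : j + 2 ≤ m ∨ j + 1 = m ∨ (j = m ∧ top = true) := by
      cases top with
      | false => simp only [Bool.false_eq_true, if_false] at hhd; omega
      | true =>
        simp only [if_true] at hhd
        have h3 : j + 2 ≤ m ∨ j + 1 = m ∨ j = m := by omega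
        tauto
    rcases hcases with hA | hB | ⟨hC, hCt⟩
    · -- Case A : j + 2 ≤ m, continuing move with new upper fuse
      obtain ⟨hbars', hinvm⟩ := stepC1 s m e top hinv j hj1 hA
      have hjb : j ∈ s.bars := hf5 (by simp only [Set.mem_Icc]; omega)
      have hBeq : (if top = true ∧ (j :: rest).head? = some m then e + 1 else m) = m := by
        rw [if_neg]; rintro ⟨-, hh⟩; simp at hh; omega
      rw [hBeq, playable_cons]
      cases rest with
      | nil =>
        rw [condR_single]
        constructor
        · intro _; omega
        · intro _; exact ⟨hjb, trivial⟩
      | cons a l =>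
        rw [condR_cons2]
        have ha1 : 1 ≤ a := hposr a (by simp)
        have hBeq2 : (if true = true ∧ (a :: l).head? = some j then m - 2 + 1 else j)
            = (if a = j then m - 1 else j) := by
          by_cases haj : a = j <;> simp [haj] <;> omega
        constructor
        · rintro ⟨-, hp⟩
          have hhead' : ∀ x ∈ (a :: l).head?, x ≤ if true then j else j - 1 := by
            intro x hx
            simp only [List.head?_cons, Option.mem_def, Option.some.injEq] at hx
            subst hx
            have : a ∈ (s.move j).bars := hp.1
            rw [hbars'] at this
            simpa using this.2
          have := (ih (s.move j) j (m - 2) true hinvm hposr hhead').mp hp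
          rw [hBeq2] at this
          exact ⟨by omega, this⟩
        · rintro ⟨hjm, hc⟩
          have haj' : a ≤ j := by
            by_cases haj : a = j
            · omega
            · rw [if_neg haj] at hc
              have := condR_head_lt l a j hc
              omega
          have hhead' : ∀ x ∈ (a :: l).head?, x ≤ if true then j else j - 1 := by
            intro x hx
            simp only [List.head?_cons, Option.mem_def, Option.some.injEq] at hx
            subst hx
            simpa using haj'
          refine ⟨hjb, (ih (s.move j) j (m - 2) true hinvm hposr hhead').mpr ?_⟩
          rw [hBeq2]
          exact hc
    · -- Case B : j + 1 = m, terminal move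
      obtain ⟨hbars', hinvm⟩ := stepT s m e top hinv j hj1 (Or.inl hB)
      have hjb : j ∈ s.bars := hf5 (by simp only [Set.mem_Icc]; omega)
      have hBeq : (if top = true ∧ (j :: rest).head? = some m then e + 1 else m) = m := by
        rw [if_neg]; rintro ⟨-, hh⟩; simp at hh; omega
      rw [hBeq, playable_cons]
      cases rest with
      | nil =>
        rw [condR_single]
        constructor
        · intro _; omega
        · intro _; exact ⟨hjb, trivial⟩
      | cons a l =>
        rw [condR_cons2]
        have ha1 : 1 ≤ a := hposr a (by simp)
        have hifj : (if a = j then m - 1 else j) = j := by split <;> omega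
        rw [hifj]
        have hBeq2 : (if false = true ∧ (a :: l).head? = some j then 0 + 1 else j) = j := by
          simp
        constructor
        · rintro ⟨-, hp⟩
          have hhead' : ∀ x ∈ (a :: l).head?, x ≤ if false then j else j - 1 := by
            intro x hx
            simp only [List.head?_cons, Option.mem_def, Option.some.injEq] at hx
            subst hx
            have : a ∈ (s.move j).bars := hp.1
            rw [hbars'] at this
            simpa using this.2
          have := (ih (s.move j) j 0 false hinvm hposr hhead').mp hp
          rw [hBeq2] at this
          exact ⟨by omega, this⟩
        · rintro ⟨hjm, hc⟩
          have haj' : a < j := condR_head_lt l a j hc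
          have hhead' : ∀ x ∈ (a :: l).head?, x ≤ if false then j else j - 1 := by
            intro x hx
            simp only [List.head?_cons, Option.mem_def, Option.some.injEq] at hx
            subst hx
            simpa using (by omega : a ≤ j - 1)
          refine ⟨hjb, (ih (s.move j) j 0 false hinvm hposr hhead').mpr ?_⟩
          rw [hBeq2]
          exact hc
    · -- Case C : j = m with top = true
      subst hC hCt
      have hjb : j ∈ s.bars := (hf6 rfl).2.1
      have hje : j ≤ e := (hf6 rfl).1
      have hBeq : (if true = true ∧ (j :: rest).head? = some j then e + 1 else j) = e + 1 := by
        simp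
      rw [hBeq, playable_cons]
      rcases Nat.lt_or_ge j e with hlt | hge
      · -- j < e : continuing move at the top fuse
        obtain ⟨hbars', hinvm⟩ := stepC2 s j e hinv (by omega)
        cases rest with
        | nil =>
          rw [condR_single]
          constructor
          · intro _; omega
          · intro _; exact ⟨hjb, trivial⟩
        | cons a l =>
          rw [condR_cons2]
          have ha1 : 1 ≤ a := hposr a (by simp)
          have hBeq2 : (if true = true ∧ (a :: l).head? = some j then e - 1 + 1 else j)
              = (if a = j then e + 1 - 1 else j) := by
            by_cases haj : a = j <;> simp [haj] <;> omega
          constructor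
          · rintro ⟨-, hp⟩
            have hhead' : ∀ x ∈ (a :: l).head?, x ≤ if true then j else j - 1 := by
              intro x hx
              simp only [List.head?_cons, Option.mem_def, Option.some.injEq] at hx
              subst hx
              have : a ∈ (s.move j).bars := hp.1
              rw [hbars'] at this
              simpa using this.2
            have := (ih (s.move j) j (e - 1) true hinvm hposr hhead').mp hp
            rw [hBeq2] at this
            exact ⟨by omega, this⟩
          · rintro ⟨hjm, hc⟩
            have haj' : a ≤ j := by
              by_cases haj : a = j
              · omega
              · rw [if_neg haj] at hc
                have := condR_head_lt l a j hc
                omega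
            have hhead' : ∀ x ∈ (a :: l).head?, x ≤ if true then j else j - 1 := by
              intro x hx
              simp only [List.head?_cons, Option.mem_def, Option.some.injEq] at hx
              subst hx
              simpa using haj'
            refine ⟨hjb, (ih (s.move j) j (e - 1) true hinvm hposr hhead').mpr ?_⟩
            rw [hBeq2]
            exact hc
      · -- j = e : terminal move at the top fuse
        have hjee : e = j := by omega
        obtain ⟨hbars', hinvm⟩ := stepT s j e true hinv j hj1 (Or.inr ⟨rfl, rfl, hjee⟩)
        cases rest with
        | nil =>
          rw [condR_single]
          constructor
          · intro _; omega
          · intro _; exact ⟨hjb, trivial⟩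
        | cons a l =>
          rw [condR_cons2]
          have ha1 : 1 ≤ a := hposr a (by simp)
          have hifj : (if a = j then e + 1 - 1 else j) = j := by split <;> omega
          rw [hifj]
          have hBeq2 : (if false = true ∧ (a :: l).head? = some j then 0 + 1 else j) = j := by
            simp
          constructor
          · rintro ⟨-, hp⟩
            have hhead' : ∀ x ∈ (a :: l).head?, x ≤ if false then j else j - 1 := by
              intro x hx
              simp only [List.head?_cons, Option.mem_def, Option.some.injEq] at hx
              subst hx
              have : a ∈ (s.move j).bars := hp.1
              rw [hbars'] at this
              simpa using this.2
            have := (ih (s.move j) j 0 false hinvm hposr hhead').mp hp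
            rw [hBeq2] at this
            exact ⟨by omega, this⟩
          · rintro ⟨hjm, hc⟩
            have haj' : a < j := condR_head_lt l a j hc
            have hhead' : ∀ x ∈ (a :: l).head?, x ≤ if false then j else j - 1 := by
              intro x hx
              simp only [List.head?_cons, Option.mem_def, Option.some.injEq] at hx
              subst hx
              simpa using (by omega : a ≤ j - 1)
            refine ⟨hjb, (ih (s.move j) j 0 false hinvm hposr hhead').mpr ?_⟩
            rw [hBeq2]
            exact hc
/-- The count-based condition from the theorem statement. -/
def CCond (js : List ℕ) (b : ℕ) : Prop :=
  ∀ (q : ℕ) (hq : q < js.dedup.length),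
    js.count (js.dedup[q]'hq) ≤
      ((b :: js.dedup)[q]'(by simp only [List.length_cons]; omega)) - js.dedup[q]'hq

lemma chain_le_head (j : ℕ) (l : List ℕ) (hc : List.Chain' (fun a b => b ≤ a) (j :: l)) :
    ∀ x ∈ l, x ≤ j := by
  induction l generalizing j with
  | nil => intro x hx; simp at hx
  | cons a t ihl =>
    intro x hx
    rw [List.Chain', List.isChain_cons_cons] at hc
    rcases List.mem_cons.mp hx with rfl | hx'
    · exact hc.1
    · exact le_trans (ihl a hc.2 x hx') hc.1

lemma dedup_chain_cons (x : ℕ) (t : List ℕ)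
    (hc : List.Chain' (fun a b => b ≤ a) (x :: t)) :
    ∃ d', (x :: t).dedup = x :: d' ∧ x ∉ d' := by
  induction t generalizing x with
  | nil => exact ⟨[], by simp, by simp⟩
  | cons y t' ihl =>
    rw [List.Chain', List.isChain_cons_cons] at hc
    by_cases hmem : x ∈ y :: t'
    · have hyx : y = x := by
        have h1 : y ≤ x := hc.1
        rcases List.mem_cons.mp hmem with h | h
        · omega
        · have := chain_le_head y t' hc.2 x h
          omega
      subst hyx
      obtain ⟨d', hd, hnd⟩ := ihl y hc.2
      exact ⟨d', by rw [List.dedup_cons_of_mem hmem, hd], hnd⟩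
    · refine ⟨(y :: t').dedup, List.dedup_cons_of_notMem hmem, ?_⟩
      intro hx
      exact hmem (List.mem_dedup.mp hx)

lemma condR_chain (js : List ℕ) : ∀ b, CondR js b → List.Chain' (fun a b => b ≤ a) js := by
  induction js with
  | nil => intro b _; simp [List.Chain']
  | cons j rest ih =>
    intro b h
    cases rest with
    | nil => simp [List.Chain']
    | cons a l =>
      rw [condR_cons2] at h
      rw [List.Chain', List.isChain_cons_cons]
      refine ⟨?_, ih _ h.2⟩
      by_cases haj : a = j
      · omega
      · rw [if_neg haj] at h
        have := condR_head_lt l a j h.2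
        omega

lemma condR_iff_ccond (js : List ℕ) : ∀ b, List.Chain' (fun a b => b ≤ a) js →
    (CondR js b ↔ CCond js b) := by
  induction js with
  | nil =>
    intro b _
    constructor
    · intro _ q hq; simp at hq
    · intro _; trivial
  | cons j rest ih =>
    intro b hc
    cases rest with
    | nil =>
      rw [condR_single]
      have hded : ([j] : List ℕ).dedup = [j] :=
        List.dedup_cons_of_notMem (List.not_mem_nil (a := j))
      constructor
      · intro h q hq
        rw [hded] at hq
        simp only [List.length_cons, List.length_nil] at hq
        have hq0 : q = 0 := by omega
        subst hq0
        simp only [CCond, hded, List.getElem_cons_zero, List.count_cons_self,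
          List.count_nil]
        omega
      · intro h
        have h0 := h 0 (by rw [hded]; simp)
        simp only [hded, List.getElem_cons_zero, List.count_cons_self,
          List.count_nil] at h0
        omega
    | cons a l =>
      rw [List.Chain', List.isChain_cons_cons] at hc
      have haj : a ≤ j := hc.1
      have hchain := hc.2
      rw [condR_cons2]
      by_cases heq : a = j
      · -- repeated value
        subst heq
        rw [if_pos rfl, ih (b - 1) hchain]
        have hded : (a :: a :: l).dedup = (a :: l).dedup :=
          List.dedup_cons_of_mem (List.mem_cons_self (a := a) (l := l))
        obtain ⟨d', hd, hnd⟩ := dedup_chain_cons a l hchain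
        have hcc1 : ∀ (x : ℕ) (t : List ℕ), x ≠ a → List.count x (a :: t) = List.count x t := by
          intro x t hx
          rw [List.count_cons]
          simp [Ne.symm hx]
        constructor
        · rintro ⟨hjb, hcc⟩ q hq
          rw [hded, hd] at hq
          simp only [hded, hd]
          cases q with
          | zero =>
            have h0 := hcc 0 (by rw [hd]; simp)
            simp only [hd, List.getElem_cons_zero, List.count_cons_self] at h0
            simp only [List.getElem_cons_zero, List.count_cons_self]
            omega
          | succ p =>
            simp only [List.length_cons] at hq
            have hp : p < d'.length := by omega
            have hne : d'[p] ≠ a := by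
              intro hcon
              exact hnd (hcon ▸ List.getElem_mem hp)
            have hpp := hcc (p + 1) (by rw [hd]; simp only [List.length_cons]; omega)
            simp only [hd, List.getElem_cons_succ] at hpp
            simp only [List.getElem_cons_succ]
            rw [hcc1 _ _ hne]
            exact hpp
        · intro h
          have h0 := h 0 (by rw [hded, hd]; simp)
          simp only [hded, hd, List.getElem_cons_zero, List.count_cons_self] at h0
          have hcnt1 : 1 ≤ (a :: l).count a := by
            rw [List.count_cons_self]; omega
          refine ⟨by omega, ?_⟩
          intro q hq
          rw [hd] at hq
          simp only [hd]
          cases q with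
          | zero =>
            simp only [List.getElem_cons_zero, List.count_cons_self] at h0 ⊢
            omega
          | succ p =>
            simp only [List.length_cons] at hq
            have hp : p < d'.length := by omega
            have hne : d'[p] ≠ a := by
              intro hcon
              exact hnd (hcon ▸ List.getElem_mem hp)
            have hpp := h (p + 1) (by rw [hded, hd]; simp only [List.length_cons]; omega)
            simp only [hded, hd, List.getElem_cons_succ] at hpp
            simp only [List.getElem_cons_succ]
            rw [hcc1 _ _ hne] at hpp
            exact hpp
      · -- new strictly smaller value
        have halt : a < j := by omega
        have hjnot : j ∉ a :: l := by
          intro hmem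
          rcases List.mem_cons.mp hmem with h | h
          · omega
          · have := chain_le_head a l hchain j h
            omega
        have hded : (j :: a :: l).dedup = j :: (a :: l).dedup :=
          List.dedup_cons_of_notMem hjnot
        have hcnt0 : (a :: l).count j = 0 := List.count_eq_zero.mpr hjnot
        rw [if_neg heq, ih j hchain]
        have hccj : ∀ (x : ℕ), x ≠ j → List.count x (j :: a :: l) = List.count x (a :: l) := by
          intro x hx
          rw [List.count_cons]
          simp [Ne.symm hx]
        constructor
        · rintro ⟨hjb, hcc⟩ q hq
          rw [hded] at hq
          simp only [hded]
          cases q with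
          | zero =>
            simp only [List.getElem_cons_zero, List.count_cons_self, hcnt0]
            omega
          | succ p =>
            simp only [List.length_cons] at hq
            have hp : p < (a :: l).dedup.length := by omega
            have hne : (a :: l).dedup[p] ≠ j := by
              intro hcon
              exact hjnot (hcon ▸ List.mem_dedup.mp (List.getElem_mem hp))
            have hpp := hcc p hp
            simp only [List.getElem_cons_succ]
            rw [hccj _ hne]
            exact hpp
        · intro h
          have h0 := h 0 (by rw [hded]; simp)
          simp only [hded, List.getElem_cons_zero, List.count_cons_self, hcnt0] at h0
          refine ⟨by omega, ?_⟩
          intro p hp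
          have hpp := h (p + 1) (by rw [hded]; simp only [List.length_cons]; omega)
          have hne : (a :: l).dedup[p] ≠ j := by
            intro hcon
            exact hjnot (hcon ▸ List.mem_dedup.mp (List.getElem_mem hp))
          simp only [hded, List.getElem_cons_succ] at hpp
          rw [hccj _ hne] at hpp
          exact hpp
/-- Characterization of the playable sequences from a state with a `k`-fuse whose
first entry is at most `k`: they are exactly the weakly decreasing sequences such
that, writing the distinct values in decreasing order as `v_1 > ⋯ > v_p` (that is,
`js.dedup`) with multiplicities `r_1, …, r_p` and setting `v_0 = k+1`, one has
`r_q ≤ v_{q-1} - v_q` for all `q`. -/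
theorem stmt13 (k : ℕ) (hk : 1 ≤ k) (s : BarredState) (hs : HasFuse k s)
    (js : List ℕ) (hpos : ∀ j ∈ js, 1 ≤ j) (hhead : ∀ a ∈ js.head?, a ≤ k) :
    PlayableSeq s js ↔
      (List.Chain' (fun a b => b ≤ a) js ∧
        ∀ (q : ℕ) (hq : q < js.dedup.length),
          js.count (js.dedup[q]'hq) ≤
            (((k + 1) :: js.dedup)[q]'(by simp only [List.length_cons]; omega)) -
              js.dedup[q]'hq) := by
  obtain ⟨⟨hp1, hp2, hp3⟩, hbars⟩ := hs
  have hinv : StInv s (k + 1) 0 false := by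
    refine ⟨by omega, ?_, ?_, ?_, ?_, by simp⟩
    · intro i h1 h2; exact hp1 i h1 (by omega)
    · intro i h1 h2; exact hp3 i h1 (by omega)
    · intro _; simpa using hp2
    · intro x hx
      simp only [Set.mem_Icc] at hx
      exact hbars x hx.1 (by omega)
  have hmain := mainLemma js s (k + 1) 0 false hinv hpos
    (by intro a ha; simpa using hhead a ha)
  rw [if_neg (by rintro ⟨h, -⟩; simp at h)] at hmain
  rw [hmain]
  constructor
  · intro h
    have hchain := condR_chain js (k + 1) h
    exact ⟨hchain, (condR_iff_ccond js (k + 1) hchain).mp h⟩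
  · rintro ⟨hchain, hcc⟩
    exact (condR_iff_ccond js (k + 1) hchain).mpr hcc
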